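/- Let κ ∈ (0,1), λ = √(1−κ²). Suppose p : U → ℂ is differentiable with (p')² = 4p³ − g₂p − g₃ where g₂ = (3λ²+1)/3, g₃ = (9λ²−1)/27, and p + 1/3 nonvanishing on U. Then d := 1 − (κ²/2)/(p + 1/3) satisfies (d')² = 2(1 − d)(d² − λ²). -/

import Mathlib

theorem stmt_17 (κ : ℝ) (hκ : κ ∈ Set.Ioo (0:ℝ) 1) (l : ℝ) (hl : l = Real.sqrt (1 - κ^2))
    (g₂ g₃ : ℂ) (hg₂ : g₂ = (3 * (l:ℂ)^2 + 1) / 3) (hg₃ : g₃ = (9 * (l:ℂ)^2 - 1) / 27)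
    (U : Set ℂ) (hU : IsOpen U) (p : ℂ → ℂ)
    (hp : ∀ z ∈ U, DifferentiableAt ℂ p z)
    (hpne : ∀ z ∈ U, p z + 1/3 ≠ 0)
    (hpode : ∀ z ∈ U, (deriv p z) ^ 2 = 4 * (p z)^3 - g₂ * p z - g₃)
    (d : ℂ → ℂ) (hd : d = fun z => 1 - ((κ:ℂ)^2 / 2) / (p z + 1/3)) :
    ∀ z ∈ U, (deriv d z) ^ 2 = 2 * (1 - d z) * ((d z)^2 - (l:ℂ)^2) := by
  intro z hz
  have hq : p z + 1/3 ≠ 0 := hpne z hz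
  have hl2 : ((l:ℂ))^2 = 1 - (κ:ℂ)^2 := by
    have h1 : (1:ℝ) - κ^2 ≥ 0 := by nlinarith [hκ.1, hκ.2]
    have h2 : (l:ℝ)^2 = 1 - κ^2 := by rw [hl]; exact Real.sq_sqrt h1
    have h3 := congrArg (fun x : ℝ => (x:ℂ)) h2
    push_cast at h3
    simpa using h3
  have hpd : HasDerivAt p (deriv p z) z := (hp z hz).hasDerivAt
  have hqd : HasDerivAt (fun w => p w + 1/3) (deriv p z) z := hpd.add_const _
  have hdd : HasDerivAt d
      (0 - (0 * (p z + 1/3) - ((κ:ℂ)^2 / 2) * deriv p z) / (p z + 1/3)^2) z := by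
    rw [hd]
    exact (hasDerivAt_const z (1:ℂ)).sub (((hasDerivAt_const z ((κ:ℂ)^2/2)).div hqd hq))
  rw [hdd.deriv, hd]
  simp only
  have hode := hpode z hz
  rw [hg₂, hg₃, hl2] at hode
  rw [hl2]
  set q := p z + 1/3 with hqdef
  have hpz : p z = q - 1/3 := by rw [hqdef]; ring
  rw [hpz] at hode
  field_simp [hq]
  linear_combination (κ:ℂ)^4 * hode
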